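/- Let m1, m2 be positive integers with m2 even and g = gcd(m1,m2). The spectral index set Γ(m) = Γ̄(m) \ Γ^U has exactly m1 m2 elements, where Γ̄(m) = {γ ∈ ℕ×ℤ : 1 ≤ γ1 ≤ m1, γ1/m1 + |γ2|/m2 ≤ 1} ∪ {(0,γ2) : γ2 ∈ 2ℤ, |γ2| < m2} and Γ^U = {γ ∈ Γ̄(m) : γ1/m1 + γ2/m2 = 1, γ2 ≠ 0}. Moreover #Γ̄(m) = m1 m2 + g − 1 and #Γ^U = g − 1. -/

import Mathlib

/-- The extended spectral index set Γ̄(m). -/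
def GammaBar (m1 m2 : ℕ) : Set (ℤ × ℤ) :=
  {γ | (1 ≤ γ.1 ∧ γ.1 ≤ (m1 : ℤ) ∧ (γ.1 : ℝ) / m1 + (|γ.2| : ℝ) / m2 ≤ 1) ∨
       (γ.1 = 0 ∧ Even γ.2 ∧ |γ.2| < (m2 : ℤ))}

/-- The subset Γ^U of Γ̄(m). -/
def GammaU (m1 m2 : ℕ) : Set (ℤ × ℤ) :=
  {γ ∈ GammaBar m1 m2 | (γ.1 : ℝ) / m1 + (γ.2 : ℝ) / m2 = 1 ∧ γ.2 ≠ 0}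

lemma real_le_iff (m1 m2 : ℕ) (hm1 : 0 < m1) (hm2 : 0 < m2) (j k : ℤ) :
    (j:ℝ)/m1 + (|k|:ℝ)/m2 ≤ 1 ↔ (m1:ℤ) * |k| + m2 * j ≤ m1*m2 := by
  have h1 : (0:ℝ) < m1 := by exact_mod_cast hm1
  have h2 : (0:ℝ) < m2 := by exact_mod_cast hm2
  rw [div_add_div _ _ (ne_of_gt h1) (ne_of_gt h2), div_le_one (by positivity),
    show (j:ℝ)*m2 + (m1:ℝ)*|(k:ℝ)| = ((m1*|k| + m2*j : ℤ):ℝ) by push_cast; ring,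
    show ((m1:ℝ)*(m2:ℝ)) = ((m1*m2:ℤ):ℝ) by push_cast; ring, Int.cast_le]

lemma real_eq_iff (m1 m2 : ℕ) (hm1 : 0 < m1) (hm2 : 0 < m2) (j k : ℤ) :
    (j:ℝ)/m1 + (k:ℝ)/m2 = 1 ↔ (m1:ℤ) * k + m2 * j = m1*m2 := by
  have h1 : (0:ℝ) < m1 := by exact_mod_cast hm1
  have h2 : (0:ℝ) < m2 := by exact_mod_cast hm2
  rw [div_add_div _ _ (ne_of_gt h1) (ne_of_gt h2), div_eq_one_iff_eq (by positivity),
    show (j:ℝ)*m2 + (m1:ℝ)*(k:ℝ) = ((m1*k + m2*j : ℤ):ℝ) by push_cast; ring,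
    show ((m1:ℝ)*(m2:ℝ)) = ((m1*m2:ℤ):ℝ) by push_cast; ring, Int.cast_inj]

noncomputable def finA (m1 m2 : ℕ) : Finset (ℤ×ℤ) :=
  ((Finset.Icc 1 (m1:ℤ)) ×ˢ (Finset.Icc (-(m2:ℤ)) (m2:ℤ))).filter
    (fun p => (m1:ℤ) * |p.2| + (m2:ℤ) * p.1 ≤ (m1:ℤ) * m2)

noncomputable def finB (m2 : ℕ) : Finset (ℤ×ℤ) :=
  ({(0:ℤ)} : Finset ℤ) ×ˢ ((Finset.Ioo (-(m2:ℤ)) (m2:ℤ)).filter (fun k => Even k))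

noncomputable def finE (m1 m2 : ℕ) : Finset (ℤ×ℤ) :=
  ((Finset.Icc 1 ((m1:ℤ)-1)) ×ˢ (Finset.Icc 1 ((m2:ℤ)-1))).filter
    (fun p => (m1:ℤ) * p.2 + (m2:ℤ) * p.1 = (m1:ℤ) * m2)

noncomputable def finP (m1 m2 : ℕ) : Finset (ℤ×ℤ) :=
  ((Finset.Icc 1 ((m1:ℤ)-1)) ×ˢ (Finset.Icc 1 ((m2:ℤ)-1))).filter
    (fun p => (m1:ℤ) * p.2 + (m2:ℤ) * p.1 ≤ (m1:ℤ) * m2)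

noncomputable def finQ (m1 m2 : ℕ) : Finset (ℤ×ℤ) :=
  ((Finset.Icc 1 ((m1:ℤ)-1)) ×ˢ (Finset.Icc 1 ((m2:ℤ)-1))).filter
    (fun p => (m1:ℤ) * m2 ≤ (m1:ℤ) * p.2 + (m2:ℤ) * p.1)

lemma mem_finA (m1 m2 : ℕ) (hm1 : 0 < m1) (p : ℤ×ℤ) :
    p ∈ finA m1 m2 ↔ 1 ≤ p.1 ∧ p.1 ≤ (m1:ℤ) ∧ (m1:ℤ) * |p.2| + m2 * p.1 ≤ m1*m2 := by
  simp only [finA, Finset.mem_filter, Finset.mem_product, Finset.mem_Icc]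
  constructor
  · rintro ⟨⟨⟨h1, h2⟩, _⟩, h5⟩; exact ⟨h1, h2, h5⟩
  · rintro ⟨h1, h2, h5⟩
    have hm1' : (1:ℤ) ≤ m1 := by exact_mod_cast hm1
    refine ⟨⟨⟨h1, h2⟩, ?_, ?_⟩, h5⟩ <;> nlinarith [abs_nonneg p.2, le_abs_self p.2, neg_abs_le p.2]

lemma mem_finE (m1 m2 : ℕ) (hm1 : 0 < m1) (hm2 : 0 < m2) (p : ℤ×ℤ) :
    p ∈ finE m1 m2 ↔ 1 ≤ p.1 ∧ 1 ≤ p.2 ∧ (m1:ℤ) * p.2 + m2 * p.1 = m1*m2 := by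
  simp only [finE, Finset.mem_filter, Finset.mem_product, Finset.mem_Icc]
  constructor
  · rintro ⟨⟨⟨h1, _⟩, h3, _⟩, h5⟩; exact ⟨h1, h3, h5⟩
  · rintro ⟨h1, h3, h5⟩
    have hm1' : (1:ℤ) ≤ m1 := by exact_mod_cast hm1
    have hm2' : (1:ℤ) ≤ m2 := by exact_mod_cast hm2
    refine ⟨⟨⟨h1, ?_⟩, h3, ?_⟩, h5⟩ <;> nlinarith

lemma gammaBar_eq (m1 m2 : ℕ) (hm1 : 0 < m1) (hm2 : 0 < m2) :
    GammaBar m1 m2 = ↑(finB m2 ∪ finA m1 m2) := by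
  ext p
  simp only [GammaBar, Set.mem_setOf_eq, Finset.coe_union, Set.mem_union, Finset.mem_coe,
    mem_finA m1 m2 hm1, finB, Finset.mem_product, Finset.mem_singleton, Finset.mem_filter,
    Finset.mem_Ioo, real_le_iff m1 m2 hm1 hm2, abs_lt]
  tauto

lemma gammaU_eq (m1 m2 : ℕ) (hm1 : 0 < m1) (hm2 : 0 < m2) :
    GammaU m1 m2 = ↑(finE m1 m2) := by
  have hm1' : (1:ℤ) ≤ m1 := by exact_mod_cast hm1
  have hm2' : (1:ℤ) ≤ m2 := by exact_mod_cast hm2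
  ext p
  simp only [GammaU, Set.mem_setOf_eq, Finset.mem_coe, mem_finE m1 m2 hm1 hm2,
    real_eq_iff m1 m2 hm1 hm2]
  constructor
  · rintro ⟨hbar, heq, hne⟩
    rcases hbar with ⟨h1, h2, h3⟩ | ⟨h0, _, habs⟩
    · rw [real_le_iff m1 m2 hm1 hm2] at h3
      have hk : 0 ≤ p.2 := by nlinarith [le_abs_self p.2, abs_nonneg p.2]
      have hk1 : 1 ≤ p.2 := lt_of_le_of_ne hk (Ne.symm hne)
      exact ⟨h1, hk1, heq⟩
    · exfalso
      rw [h0] at heq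
      have : (m1:ℤ) * p.2 = m1 * m2 := by linarith
      have : p.2 = m2 := by
        have hm1z : (m1:ℤ) ≠ 0 := by positivity
        exact mul_left_cancel₀ hm1z this
      have := le_abs_self p.2
      omega
  · rintro ⟨h1, h3, h5⟩
    refine ⟨Or.inl ⟨h1, by nlinarith, ?_⟩, h5, by omega⟩
    rw [real_le_iff m1 m2 hm1 hm2, abs_of_nonneg (by omega : (0:ℤ) ≤ p.2)]
    omega

lemma card_finB (m2 : ℕ) (hm2 : 0 < m2) (heven : Even m2) : (finB m2).card = m2 - 1 := by
  obtain ⟨b, hb⟩ := heven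
  have hS : (Finset.Ioo (-(m2:ℤ)) (m2:ℤ)).filter (fun k => Even k)
      = Finset.image (fun t => 2*t) (Finset.Icc (-(b:ℤ)+1) ((b:ℤ)-1)) := by
    ext k
    simp only [Finset.mem_filter, Finset.mem_Ioo, Finset.mem_image, Finset.mem_Icc, Int.even_iff]
    constructor
    · rintro ⟨⟨h1, h2⟩, h3⟩
      exact ⟨k/2, by omega, by omega⟩
    · rintro ⟨t, ht, rfl⟩; omega
  have hinj : Function.Injective (fun t : ℤ => 2*t) := fun x y h => by dsimp only at h; omega
  rw [finB, Finset.card_product, hS, Finset.card_image_of_injective _ hinj,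
    Finset.card_singleton, Int.card_Icc]
  omega

lemma card_finE (m1 m2 : ℕ) (hm1 : 0 < m1) (hm2 : 0 < m2) :
    (finE m1 m2).card = Nat.gcd m1 m2 - 1 := by
  set g := Nat.gcd m1 m2 with hgdef
  have hgpos : 0 < g := Nat.gcd_pos_of_pos_left m2 hm1
  set a := m1 / g with hadef
  set b := m2 / g with hbdef
  have hga : m1 = g * a := (Nat.mul_div_cancel' (Nat.gcd_dvd_left m1 m2)).symm
  have hgb : m2 = g * b := (Nat.mul_div_cancel' (Nat.gcd_dvd_right m1 m2)).symm
  have hcop : Nat.Coprime a b := Nat.coprime_div_gcd_div_gcd hgpos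
  have hapos : 0 < a := by
    rcases Nat.eq_zero_or_pos a with h | h
    · rw [h, Nat.mul_zero] at hga; omega
    · exact h
  have hbpos : 0 < b := by
    rcases Nat.eq_zero_or_pos b with h | h
    · rw [h, Nat.mul_zero] at hgb; omega
    · exact h
  have hA1 : (1:ℤ) ≤ (a:ℤ) := by exact_mod_cast hapos
  have hB1 : (1:ℤ) ≤ (b:ℤ) := by exact_mod_cast hbpos
  have hG1 : (1:ℤ) ≤ (g:ℤ) := by exact_mod_cast hgpos
  have hA0 : ((a:ℤ)) ≠ 0 := by omega
  have hG0 : ((g:ℤ)) ≠ 0 := by omega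
  have hM1 : (m1:ℤ) = (g:ℤ) * a := by exact_mod_cast hga
  have hM2 : (m2:ℤ) = (g:ℤ) * b := by exact_mod_cast hgb
  have hcopZ : IsCoprime (a:ℤ) (b:ℤ) := Nat.isCoprime_iff_coprime.mpr hcop
  have hcard : (Finset.Ioo (0:ℤ) (g:ℤ)).card = (finE m1 m2).card := by
    apply Finset.card_bij (fun t _ => (((a:ℤ)*t, (b:ℤ)*((g:ℤ)-t)) : ℤ×ℤ))
    · intro t ht
      obtain ⟨ht1, ht2⟩ := Finset.mem_Ioo.mp ht
      rw [mem_finE m1 m2 hm1 hm2]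
      refine ⟨?_, ?_, ?_⟩
      · show (1:ℤ) ≤ (a:ℤ)*t
        have := mul_le_mul hA1 (show (1:ℤ) ≤ t by omega) zero_le_one (by omega)
        linarith
      · show (1:ℤ) ≤ (b:ℤ)*((g:ℤ)-t)
        have := mul_le_mul hB1 (show (1:ℤ) ≤ (g:ℤ)-t by omega) zero_le_one (by omega)
        linarith
      · show (m1:ℤ) * ((b:ℤ)*((g:ℤ)-t)) + (m2:ℤ) * ((a:ℤ)*t) = (m1:ℤ)*(m2:ℤ)
        rw [hM1, hM2]; ring
    · intro t1 h1 t2 h2 heq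
      simp only [Prod.mk.injEq] at heq
      exact mul_left_cancel₀ hA0 heq.1
    · intro p hp
      rw [mem_finE m1 m2 hm1 hm2] at hp
      obtain ⟨h1, h3, h5⟩ := hp
      rw [hM1, hM2] at h5
      have h5' : (a:ℤ) * p.2 + (b:ℤ) * p.1 = (g:ℤ) * ((a:ℤ)*(b:ℤ)) := by
        apply mul_left_cancel₀ hG0; linarith [h5]
      have hdvd : (a:ℤ) ∣ (b:ℤ) * p.1 := ⟨(g:ℤ)*(b:ℤ) - p.2, by linarith⟩
      obtain ⟨t, ht⟩ := hcopZ.dvd_of_dvd_mul_left hdvd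
      have hk : p.2 = (b:ℤ) * ((g:ℤ) - t) := by
        apply mul_left_cancel₀ hA0
        have h6 : (a:ℤ) * p.2 + (b:ℤ) * ((a:ℤ)*t) = (g:ℤ) * ((a:ℤ)*(b:ℤ)) := by
          rw [← ht]; exact h5'
        linear_combination h6
      have h1' : (1:ℤ) ≤ (a:ℤ)*t := by rw [← ht]; exact h1
      have h3' : (1:ℤ) ≤ (b:ℤ)*((g:ℤ)-t) := by rw [← hk]; exact h3
      refine ⟨t, ?_, ?_⟩
      · simp only [Finset.mem_Ioo]
        constructor
        · rcases le_or_gt 0 t with h | h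
          · rcases eq_or_lt_of_le h with h' | h'
            · exfalso; rw [← h'] at h1'; simp at h1'
            · exact h'
          · exfalso
            have := mul_le_mul_of_nonneg_left h.le (show (0:ℤ) ≤ a by omega)
            simp at this; linarith
        · by_contra hcon
          push_neg at hcon
          have := mul_le_mul_of_nonneg_left (show (g:ℤ) - t ≤ 0 by omega)
            (show (0:ℤ) ≤ b by omega)
          simp at this; linarith
      · rw [Prod.ext_iff]; exact ⟨ht.symm, hk.symm⟩
  rw [← hcard, Int.card_Ioo]
  omega

lemma card_PQ (m1 m2 : ℕ) : (finP m1 m2).card = (finQ m1 m2).card := by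
  apply Finset.card_nbij' (i := fun p => ((m1:ℤ) - p.1, (m2:ℤ) - p.2))
    (j := fun p => ((m1:ℤ) - p.1, (m2:ℤ) - p.2))
  · intro p hp
    simp only [Finset.mem_coe, finP, finQ, Finset.mem_filter, Finset.mem_product, Finset.mem_Icc] at *
    obtain ⟨⟨⟨a1, a2⟩, a3, a4⟩, a5⟩ := hp
    exact ⟨⟨⟨by omega, by omega⟩, by omega, by omega⟩, by linarith⟩
  · intro p hp
    simp only [Finset.mem_coe, finP, finQ, Finset.mem_filter, Finset.mem_product, Finset.mem_Icc] at *
    obtain ⟨⟨⟨a1, a2⟩, a3, a4⟩, a5⟩ := hp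
    exact ⟨⟨⟨by omega, by omega⟩, by omega, by omega⟩, by linarith⟩
  · intro p _; simp
  · intro p _; simp

lemma union_PQ (m1 m2 : ℕ) :
    finP m1 m2 ∪ finQ m1 m2
      = (Finset.Icc 1 ((m1:ℤ)-1)) ×ˢ (Finset.Icc 1 ((m2:ℤ)-1)) := by
  ext p
  simp only [Finset.mem_union, finP, finQ, Finset.mem_filter]
  have := le_total ((m1:ℤ)*p.2 + (m2:ℤ)*p.1) ((m1:ℤ)*m2)
  tauto

lemma inter_PQ (m1 m2 : ℕ) : finP m1 m2 ∩ finQ m1 m2 = finE m1 m2 := by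
  ext p
  simp only [Finset.mem_inter, finP, finQ, finE, Finset.mem_filter]
  constructor
  · rintro ⟨⟨hR, h1⟩, _, h2⟩; exact ⟨hR, le_antisymm h1 h2⟩
  · rintro ⟨hR, h⟩; exact ⟨⟨hR, h.le⟩, hR, h.ge⟩

lemma two_card_P (m1 m2 : ℕ) :
    2 * (finP m1 m2).card = (m1-1)*(m2-1) + (finE m1 m2).card := by
  have h := Finset.card_union_add_card_inter (finP m1 m2) (finQ m1 m2)
  rw [union_PQ, inter_PQ, Finset.card_product, Int.card_Icc, Int.card_Icc] at h
  have e1 : ((m1:ℤ) - 1 + 1 - 1).toNat = m1 - 1 := by omega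
  have e2 : ((m2:ℤ) - 1 + 1 - 1).toNat = m2 - 1 := by omega
  rw [e1, e2, ← card_PQ m1 m2] at h
  generalize (m1-1)*(m2-1) = K at h ⊢
  omega

lemma card_finA (m1 m2 : ℕ) (hm1 : 0 < m1) (hm2 : 0 < m2) :
    (finA m1 m2).card = m1 + 2 * (finP m1 m2).card := by
  classical
  have hm1' : (1:ℤ) ≤ m1 := by exact_mod_cast hm1
  have hm2' : (1:ℤ) ≤ m2 := by exact_mod_cast hm2
  have hzero : (finA m1 m2).filter (fun p => p.2 = 0)
      = (Finset.Icc 1 (m1:ℤ)) ×ˢ ({(0:ℤ)} : Finset ℤ) := by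
    ext p
    simp only [Finset.mem_filter, mem_finA m1 m2 hm1, Finset.mem_product, Finset.mem_Icc,
      Finset.mem_singleton]
    constructor
    · rintro ⟨⟨h1, h2, _⟩, h4⟩; exact ⟨⟨h1, h2⟩, h4⟩
    · rintro ⟨⟨h1, h2⟩, h4⟩
      refine ⟨⟨h1, h2, ?_⟩, h4⟩
      rw [h4, abs_zero, mul_zero, zero_add]
      nlinarith
  have hpos : (finA m1 m2).filter (fun p => 0 < p.2) = finP m1 m2 := by
    ext p
    simp only [Finset.mem_filter, mem_finA m1 m2 hm1, finP, Finset.mem_product, Finset.mem_Icc]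
    constructor
    · rintro ⟨⟨h1, h2, h3⟩, h4⟩
      rw [abs_of_pos h4] at h3
      refine ⟨⟨⟨h1, by nlinarith⟩, by omega, by nlinarith⟩, h3⟩
    · rintro ⟨⟨⟨h1, h2⟩, h3, h4⟩, h5⟩
      refine ⟨⟨h1, by omega, ?_⟩, by omega⟩
      rw [abs_of_pos (by omega : (0:ℤ) < p.2)]
      exact h5
  have hneg : ((finA m1 m2).filter (fun p => p.2 < 0)).card
      = ((finA m1 m2).filter (fun p => 0 < p.2)).card := by
    apply Finset.card_nbij' (i := fun p => (p.1, -p.2)) (j := fun p => (p.1, -p.2))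
    · intro p hp
      simp only [Finset.mem_coe, Finset.mem_filter, mem_finA m1 m2 hm1] at *
      obtain ⟨⟨h1, h2, h3⟩, h4⟩ := hp
      exact ⟨⟨h1, h2, by simpa [abs_neg] using h3⟩, by omega⟩
    · intro p hp
      simp only [Finset.mem_coe, Finset.mem_filter, mem_finA m1 m2 hm1] at *
      obtain ⟨⟨h1, h2, h3⟩, h4⟩ := hp
      exact ⟨⟨h1, h2, by simpa [abs_neg] using h3⟩, by omega⟩
    · intro p _; simp
    · intro p _; simp
  have split1 := Finset.card_filter_add_card_filter_not
    (s := finA m1 m2) (p := fun p => p.2 = 0)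
  have split2 := Finset.card_filter_add_card_filter_not
    (s := (finA m1 m2).filter (fun p => ¬ p.2 = 0)) (p := fun p => 0 < p.2)
  rw [Finset.filter_filter, Finset.filter_filter] at split2
  have e1 : (finA m1 m2).filter (fun p => ¬p.2 = 0 ∧ 0 < p.2)
      = (finA m1 m2).filter (fun p => 0 < p.2) := by
    ext p
    simp only [Finset.mem_filter]
    constructor
    · rintro ⟨h, _, h2⟩; exact ⟨h, h2⟩
    · rintro ⟨h, h2⟩; exact ⟨h, by omega, h2⟩
  have e2 : (finA m1 m2).filter (fun p => ¬p.2 = 0 ∧ ¬0 < p.2)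
      = (finA m1 m2).filter (fun p => p.2 < 0) := by
    ext p
    simp only [Finset.mem_filter]
    constructor
    · rintro ⟨h, h1, h2⟩; exact ⟨h, by omega⟩
    · rintro ⟨h, h2⟩; exact ⟨h, by omega, by omega⟩
  rw [e1, e2] at split2
  have hn0 : ((finA m1 m2).filter (fun p => p.2 = 0)).card = m1 := by
    rw [hzero, Finset.card_product, Int.card_Icc, Finset.card_singleton]
    omega
  rw [← hpos]
  omega


theorem stmt13 (m1 m2 : ℕ) (hm1 : 0 < m1) (hm2 : 0 < m2) (heven : Even m2)
    (g : ℕ) (hg : g = Nat.gcd m1 m2) :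
    Set.ncard (GammaBar m1 m2 \ GammaU m1 m2) = m1 * m2 ∧
    Set.ncard (GammaBar m1 m2) = m1 * m2 + g - 1 ∧
    Set.ncard (GammaU m1 m2) = g - 1 := by
  have hbar := gammaBar_eq m1 m2 hm1 hm2
  have hU := gammaU_eq m1 m2 hm1 hm2
  have hgpos : 0 < g := hg ▸ Nat.gcd_pos_of_pos_left m2 hm1
  have hdisj : Disjoint (finB m2) (finA m1 m2) := by
    rw [Finset.disjoint_left]
    intro p hp hpA
    simp only [finB, Finset.mem_product, Finset.mem_singleton] at hp
    rw [mem_finA m1 m2 hm1] at hpA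
    omega
  have hcardBar : (finB m2 ∪ finA m1 m2).card = m1*m2 + g - 1 := by
    rw [Finset.card_union_of_disjoint hdisj, card_finB m2 hm2 heven, card_finA m1 m2 hm1 hm2]
    have h2P := two_card_P m1 m2
    rw [card_finE m1 m2 hm1 hm2, ← hg] at h2P
    obtain ⟨u, rfl⟩ : ∃ u, m1 = u + 1 := ⟨m1 - 1, by omega⟩
    obtain ⟨v, rfl⟩ : ∃ v, m2 = v + 1 := ⟨m2 - 1, by omega⟩
    have hmm2 : (u+1-1)*(v+1-1) = u*v := by simp
    rw [hmm2] at h2P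
    rw [show (u+1)*(v+1) = u*v + u + v + 1 from by ring]
    generalize u*v = K at h2P ⊢
    omega
  have r2 : (GammaBar m1 m2).ncard = m1*m2 + g - 1 := by
    rw [hbar, Set.ncard_coe_finset, hcardBar]
  have r3 : (GammaU m1 m2).ncard = g - 1 := by
    rw [hU, Set.ncard_coe_finset, card_finE m1 m2 hm1 hm2, hg]
  have hsub : GammaU m1 m2 ⊆ GammaBar m1 m2 := fun p hp => hp.1
  have hfin : (GammaBar m1 m2).Finite := by
    rw [hbar]; exact Finset.finite_toSet _
  refine ⟨?_, r2, r3⟩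
  rw [Set.ncard_diff hsub (hfin.subset hsub), r2, r3]
  generalize m1*m2 = K
  omega
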